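/- Let (E, R) be a coupling of an ε-excited random walk E started from (∅, w) and a simple random walk R started at w such that for every n: E(n)₂ = R(n)₂, the difference D(n) := E(n)₁ − R(n)₁ is nonnegative and nondecreasing, and D(n+1) − D(n) ∈ {0, 2}. Then, deterministically on this coupling: whenever R has a tan point at time j relative to 0 (that is, {R(k) : 0 ≤ k ≤ j−1} does not intersect {R(j) + (t,0) : t = 0, 1, 2, …}), the excited walk is at a fresh site at time j, i.e., E(j) ∉ {E(0), …, E(j−1)}. -/
import Mathlib


open MeasureTheory ProbabilityTheory Filter Set

/-- `Log x = max (log x) 1`, as in the paper. -/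
noncomputable def Log (x : ℝ) : ℝ := max (Real.log x) 1

/-- Step distribution of simple random walk on `ℤ²`. -/
noncomputable def srwProb (d : ℤ × ℤ) : ℝ :=
  if d = (1, 0) ∨ d = (-1, 0) ∨ d = (0, 1) ∨ d = (0, -1) then 1 / 4 else 0

/-- Step distribution of an excited ("cookie") step with drift `ε` to the right. -/
noncomputable def excProb (ε : ℝ) (d : ℤ × ℤ) : ℝ :=
  if d = (1, 0) then 1 / 4 + ε
  else if d = (-1, 0) then 1 / 4 - ε
  else if d = (0, 1) ∨ d = (0, -1) then 1 / 4
  else 0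

/-- The natural filtration of a process `X`. -/
def natFilt {Ω α : Type*} [MeasurableSpace Ω] [MeasurableSpace α]
    (X : ℕ → Ω → α) (n : ℕ) : MeasurableSpace Ω :=
  ⨆ k ∈ Finset.range (n + 1), MeasurableSpace.comap (X k) inferInstance

open Classical in
/-- `E` is an `ε`-excited random walk started from `(V, w)`, under the probability
measure `μ`: conditionally on `E 0, …, E n`, if `E n` is a fresh site (not in `V` nor
in the past path) the increment has the `ε`-drifted law `excProb ε`, otherwise it is
uniform on the four neighbours. -/
structure IsExcitedRW {Ω : Type*} [MeasurableSpace Ω] (μ : Measure Ω)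
    (ε : ℝ) (V : Set (ℤ × ℤ)) (w : ℤ × ℤ) (E : ℕ → Ω → ℤ × ℤ) : Prop where
  meas : ∀ n, Measurable (E n)
  start : ∀ ω, E 0 ω = w
  step : ∀ n (d : ℤ × ℤ),
    (μ[Set.indicator {ω | E (n + 1) ω - E n ω = d} (fun _ => (1 : ℝ)) | natFilt E n])
      =ᵐ[μ] fun ω =>
        if E n ω ∈ V ∨ ∃ k < n, E k ω = E n ω then srwProb d else excProb ε d

/-- `R` is a simple random walk on `ℤ²` started at `w`, under `μ`. -/
structure IsSRW {Ω : Type*} [MeasurableSpace Ω] (μ : Measure Ω)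
    (w : ℤ × ℤ) (R : ℕ → Ω → ℤ × ℤ) : Prop where
  meas : ∀ n, Measurable (R n)
  start : ∀ ω, R 0 ω = w
  step : ∀ n (d : ℤ × ℤ),
    (μ[Set.indicator {ω | R (n + 1) ω - R n ω = d} (fun _ => (1 : ℝ)) | natFilt R n])
      =ᵐ[μ] fun _ => srwProb d

/-- `R` has a tan point at time `j` relative to time `i` : the path `R [i, j-1]`
avoids the half line `R j + ℕ × {0}`. -/
def TanPoint (R : ℕ → ℤ × ℤ) (i j : ℕ) : Prop :=
  ∀ k, i ≤ k → k < j → ∀ t : ℕ, R k ≠ R j + ((t : ℤ), 0)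

open Classical in
/-- The number of times `t ∈ [j, j + m]` which are tan points of `R` relative to `i`. -/
noncomputable def tanCount (R : ℕ → ℤ × ℤ) (i j m : ℕ) : ℕ :=
  ((Finset.Icc j (j + m)).filter fun t => TanPoint R i t).card

/-- `max_{j ≤ i} (E j)₁`. -/
noncomputable def maxUpTo {Ω : Type*} (E : ℕ → Ω → ℤ × ℤ) (i : ℕ) (ω : Ω) : ℤ :=
  (Finset.range (i + 1)).sup' (Finset.nonempty_range_iff.mpr (Nat.succ_ne_zero i))
    fun j => (E j ω).1

/-- **Tan points yield fresh sites.** Let `(E, R)` be a coupling of an `ε`-excited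
random walk `E` started from `(∅, w)` and a simple random walk `R` started at `w`,
such that the second coordinates agree and `D n = E(n)₁ - R(n)₁` is nonnegative,
nondecreasing, with increments in `{0, 2}`. Then deterministically: whenever `R` has a
tan point at time `j` relative to `0`, the excited walk is at a fresh site at time
`j`. -/
theorem tan_point_gives_fresh_site {Ω : Type*} [MeasurableSpace Ω]
    (μ : Measure Ω) [IsProbabilityMeasure μ] (ε : ℝ) (w : ℤ × ℤ)
    (E R : ℕ → Ω → ℤ × ℤ)
    (hE : IsExcitedRW μ ε ∅ w E) (hR : IsSRW μ w R)
    (h2 : ∀ n ω, (E n ω).2 = (R n ω).2)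
    (hpos : ∀ n ω, 0 ≤ (E n ω).1 - (R n ω).1)
    (hmono : ∀ n ω, (E n ω).1 - (R n ω).1 ≤ (E (n + 1) ω).1 - (R (n + 1) ω).1)
    (hjump : ∀ n ω,
      ((E (n + 1) ω).1 - (R (n + 1) ω).1) - ((E n ω).1 - (R n ω).1) = 0 ∨
      ((E (n + 1) ω).1 - (R (n + 1) ω).1) - ((E n ω).1 - (R n ω).1) = 2) :
    ∀ (ω : Ω) (j : ℕ), TanPoint (fun k => R k ω) 0 j →
      ∀ k < j, E k ω ≠ E j ω := by
  intro ω j htan k hk heq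
  have hD : ∀ a b : ℕ, a ≤ b →
      (E a ω).1 - (R a ω).1 ≤ (E b ω).1 - (R b ω).1 := by
    intro a b hab
    induction b with
    | zero => simp [Nat.le_zero.mp hab]
    | succ n ih =>
      rcases Nat.lt_succ_iff_lt_or_eq.mp (Nat.lt_succ_of_le hab) with h | h
      · exact le_trans (ih (Nat.lt_succ_iff.mp h)) (hmono n ω)
      · simp [h]
  have hle : (E k ω).1 - (R k ω).1 ≤ (E j ω).1 - (R j ω).1 := hD k j hk.le
  set t : ℤ := (R k ω).1 - (R j ω).1 with ht
  have ht0 : 0 ≤ t := by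
    have h1 : (E k ω).1 = (E j ω).1 := by rw [heq]
    omega
  have h2' : (R k ω).2 = (R j ω).2 := by
    rw [← h2 k ω, ← h2 j ω, heq]
  have := htan k (Nat.zero_le k) hk t.toNat
  apply this
  ext
  · simp only [Prod.fst_add]
    omega
  · simpa using h2'
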